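/- With the maps of the context, for every p ∈ ℝ, every λ ∈ ℂ and every function f : ℤ → ℂ, define ψ_f : ℤ → ℂ^6 by ψ_f(2y+1)_3 := f(y) and ψ_f(−2y−1)_6 := −f(y) for all y ∈ ℤ, with all other components equal to zero. Then A_p ψ_f = ψ_g where g(y) := f(y+1). (Thus on the odd-site antisymmetric subspace H_c the interaction is invisible and the interacting two-particle evolution acts as the free bilateral shift.) -/

import Mathlib

noncomputable section
open Matrix
open scoped Classical

/-- The 6×6 block-diagonal matrix `M = diag(O′, O′)`, where `O′` is the 3×3 matrix with rows
`(0, 0, −conj λ)`, `(0, 0, −conj λ)`, `(−λ, −λ, 0)`. -/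
def Mblk (l : ℂ) : Matrix (Fin 6) (Fin 6) ℂ :=
  !![0, 0, -(starRingEnd ℂ) l, 0, 0, 0;
     0, 0, -(starRingEnd ℂ) l, 0, 0, 0;
     -l, -l, 0, 0, 0, 0;
     0, 0, 0, 0, 0, -(starRingEnd ℂ) l;
     0, 0, 0, 0, 0, -(starRingEnd ℂ) l;
     0, 0, 0, -l, -l, 0]

/-- The one-step interaction unitary `E = exp(−i·M)`. -/
def Emat (l : ℂ) : Matrix (Fin 6) (Fin 6) ℂ := NormedSpace.exp ((-Complex.I) • Mblk l)

/-- The swap `S`: `(S x)(y) = (x(−y)₄, x(−y)₅, x(−y)₆, x(−y)₁, x(−y)₂, x(−y)₃)`. -/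
def Sop (x : ℤ → Fin 6 → ℂ) : ℤ → Fin 6 → ℂ := fun y i => x (-y) (![3, 4, 5, 0, 1, 2] i)

/-- The antisymmetrizer `P₋ = (1/2)(id − S)`. -/
def Pneg (x : ℤ → Fin 6 → ℂ) : ℤ → Fin 6 → ℂ := fun y i => (1 / 2) * (x y i - Sop x y i)

/-- The free evolution `D_p` at total momentum `p`:
`(D_p x)(y) = (e^{2ip} x(y)₁, e^{−2ip} x(y)₂, x(y+2)₃, e^{2ip} x(y)₄, e^{−2ip} x(y)₅, x(y−2)₆)`. -/
def Dop (p : ℝ) (x : ℤ → Fin 6 → ℂ) : ℤ → Fin 6 → ℂ := fun y =>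
  ![Complex.exp (2 * p * Complex.I) * x y 0,
    Complex.exp (-(2 * p) * Complex.I) * x y 1,
    x (y + 2) 2,
    Complex.exp (2 * p * Complex.I) * x y 3,
    Complex.exp (-(2 * p) * Complex.I) * x y 4,
    x (y - 2) 5]

/-- The interaction `J`: `(J x)(0) = E · x(0)` and `(J x)(y) = x(y)` for `y ≠ 0`. -/
def Jop (l : ℂ) (x : ℤ → Fin 6 → ℂ) : ℤ → Fin 6 → ℂ := fun y =>
  if y = 0 then (Emat l).mulVec (x 0) else x y

/-- The one-step two-particle evolution `A_p = P₋ ∘ J ∘ D_p ∘ P₋`. -/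
def Aop (l : ℂ) (p : ℝ) : (ℤ → Fin 6 → ℂ) → (ℤ → Fin 6 → ℂ) :=
  Pneg ∘ Jop l ∘ Dop p ∘ Pneg

/-- The vector `ψ_f` supported on odd relative positions: `ψ_f(2y+1)₃ = f(y)`,
`ψ_f(−2y−1)₆ = −f(y)`, all other components zero. -/
def psiodd (f : ℤ → ℂ) : ℤ → Fin 6 → ℂ := fun z =>
  ![0, 0, if Odd z then f ((z - 1) / 2) else 0,
    0, 0, if Odd z then -f ((-z - 1) / 2) else 0]



lemma not_odd_zero_int : ¬ Odd (0 : ℤ) := by decide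

lemma psiodd_zero (f : ℤ → ℂ) : psiodd f 0 = (0 : Fin 6 → ℂ) := by
  funext i
  fin_cases i
  · rfl
  · rfl
  · show (if Odd (0:ℤ) then f ((0 - 1) / 2) else 0) = (0:ℂ)
    rw [if_neg not_odd_zero_int]
  · rfl
  · rfl
  · show (if Odd (0:ℤ) then -f ((-0 - 1) / 2) else 0) = (0:ℂ)
    rw [if_neg not_odd_zero_int]

lemma Pneg_psiodd (f : ℤ → ℂ) : Pneg (psiodd f) = psiodd f := by
  funext y i
  fin_cases i
  · show (1/2 : ℂ) * ((0:ℂ) - 0) = (0:ℂ); ring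
  · show (1/2 : ℂ) * ((0:ℂ) - 0) = (0:ℂ); ring
  · show (1/2 : ℂ) * ((if Odd y then f ((y - 1) / 2) else 0)
        - (if Odd (-y) then -f ((- -y - 1) / 2) else 0))
      = (if Odd y then f ((y - 1) / 2) else 0)
    simp only [odd_neg, neg_neg]
    split_ifs <;> ring
  · show (1/2 : ℂ) * ((0:ℂ) - 0) = (0:ℂ); ring
  · show (1/2 : ℂ) * ((0:ℂ) - 0) = (0:ℂ); ring
  · show (1/2 : ℂ) * ((if Odd y then -f ((-y - 1) / 2) else 0)
        - (if Odd (-y) then f ((-y - 1) / 2) else 0))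
      = (if Odd y then -f ((-y - 1) / 2) else 0)
    simp only [odd_neg]
    split_ifs <;> ring

lemma Jop_psiodd (l : ℂ) (f : ℤ → ℂ) : Jop l (psiodd f) = psiodd f := by
  funext y i
  simp only [Jop]
  split_ifs with h
  · subst h
    rw [psiodd_zero, Matrix.mulVec_zero]
  · rfl

lemma Dop_psiodd (p : ℝ) (f : ℤ → ℂ) :
    Dop p (psiodd f) = psiodd (fun y => f (y + 1)) := by
  funext y i
  fin_cases i
  · show Complex.exp (2 * p * Complex.I) * 0 = (0:ℂ); ring
  · show Complex.exp (-(2 * p) * Complex.I) * 0 = (0:ℂ); ring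
  · show (if Odd (y + 2) then f ((y + 2 - 1) / 2) else 0)
      = (if Odd y then f ((y - 1) / 2 + 1) else 0)
    have h : Odd (y + 2) ↔ Odd y := by
      simp only [Int.odd_iff]
      omega
    simp only [h]
    by_cases ho : Odd y
    · rw [if_pos ho, if_pos ho]
      congr 1
      obtain ⟨k, hk⟩ := ho
      omega
    · rw [if_neg ho, if_neg ho]
  · show Complex.exp (2 * p * Complex.I) * 0 = (0:ℂ); ring
  · show Complex.exp (-(2 * p) * Complex.I) * 0 = (0:ℂ); ring
  · show (if Odd (y - 2) then -f ((-(y - 2) - 1) / 2) else 0)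
      = (if Odd y then -f ((-y - 1) / 2 + 1) else 0)
    have h : Odd (y - 2) ↔ Odd y := by
      simp only [Int.odd_iff]
      omega
    simp only [h]
    by_cases ho : Odd y
    · rw [if_pos ho, if_pos ho]
      congr 2
      obtain ⟨k, hk⟩ := ho
      omega
    · rw [if_neg ho, if_neg ho]

/-- On the odd-site antisymmetric subspace `H_c` the interaction is invisible and the
interacting two-particle evolution acts as the free bilateral shift:
`A_p ψ_f = ψ_g` with `g(y) = f(y+1)`. -/
theorem Aop_on_odd_subspace (l : ℂ) (p : ℝ) (f : ℤ → ℂ) :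
    Aop l p (psiodd f) = psiodd (fun y => f (y + 1)) := by
  show Pneg (Jop l (Dop p (Pneg (psiodd f)))) = _
  rw [Pneg_psiodd, Dop_psiodd, Jop_psiodd, Pneg_psiodd]
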